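/- Assume J ≠ 0, so that ψ is invertible, and set P := ψ^{-1}. Then for all α, β ∈ {1,…,n}: ∑_{γ=1}^n P_{βγ}·h_{γα} = δ_{αβ} − conj(ξ_β)·(H_{wα}/v_w − conj(v_α)·H_{ww}/(v_w·conj(v_w))). (In the paper's notation, ψ^{β̄γ} h_{γᾱ} = δ_{ᾱ}^{β̄} − ξ^{β̄} Z_{ᾱ} log ρ_w.) -/
import Mathlib

open ComplexConjugate Matrix

/-- With `P := ψ⁻¹`, for all `α, β ∈ {1,…,n}`:
`∑_γ P_{βγ}·h_{γα} = δ_{αβ} − conj(ξ_β)·(H_{wα}/v_w − conj(v_α)·H_{ww}/(v_w·conj(v_w)))`,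
i.e. `ψ^{β̄γ} h_{γᾱ} = δ_{ᾱ}^{β̄} − ξ^{β̄} Z_{ᾱ} log ρ_w`. -/
theorem stmt_7 (n : ℕ) (hn : 1 ≤ n)
    (H : Matrix (Fin (n + 1)) (Fin (n + 1)) ℂ) (v ξ : Fin (n + 1) → ℂ) (r : ℝ)
    (hξH : ∀ k, ∑ j, ξ j * H j k = (r : ℂ) * conj (v k))
    (hvξ : ∑ j, v j * ξ j = 1)
    (hHerm : ∀ j k, conj (H j k) = H k j)
    (J : ℂ) (hJ : J = ∑ j, ∑ k, conj (v j) * H.adjugate j k * v k)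
    (hJ0 : J ≠ 0)
    (ψ : Matrix (Fin (n + 1)) (Fin (n + 1)) ℂ)
    (hψ : ∀ j k, ψ j k = H j k + ((1 : ℂ) - (r : ℂ)) * v j * conj (v k))
    (P : Matrix (Fin (n + 1)) (Fin (n + 1)) ℂ) (hP : P = ψ⁻¹)
    (w : Fin (n + 1)) (hw : w = Fin.last n)
    (hvw : v w ≠ 0)
    (h : Matrix (Fin n) (Fin n) ℂ)
    (hh : ∀ α β : Fin n, h α β =
      H α.castSucc β.castSucc - v α.castSucc * H w β.castSucc / v w
        - conj (v β.castSucc) * H α.castSucc w / conj (v w)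
        + H w w * v α.castSucc * conj (v β.castSucc) / (v w * conj (v w))) :
    ∀ α β : Fin n, ∑ γ : Fin n, P β.castSucc γ.castSucc * h γ α =
      (if α = β then (1 : ℂ) else 0) - conj (ξ β.castSucc) *
        (H w α.castSucc / v w - conj (v α.castSucc) * H w w / (v w * conj (v w))) := by
  have hcw : conj (v w) ≠ 0 := by
    simpa using hvw
  -- ξᵀ ψ = conj v
  have hξψ : ∀ k, ∑ j, ξ j * ψ j k = conj (v k) := by
    intro k
    have e1 : ∑ j, ξ j * ψ j k
        = (∑ j, ξ j * H j k) + ((1 : ℂ) - (r : ℂ)) * (∑ j, v j * ξ j) * conj (v k) := by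
      rw [Finset.mul_sum, Finset.sum_mul, ← Finset.sum_add_distrib]
      refine Finset.sum_congr rfl fun j _ => by rw [hψ]; ring
    rw [e1, hξH, hvξ]; ring
  -- ψ (conj ξ) = v
  have hψξ : ∀ j, ∑ k, ψ j k * conj (ξ k) = v j := by
    intro j
    have h1 : ∑ k, H j k * conj (ξ k) = (r : ℂ) * v j := by
      have h2 := congrArg conj (hξH j)
      rw [map_sum] at h2
      calc ∑ k, H j k * conj (ξ k) = ∑ k, conj (ξ k * H k j) := by
            refine Finset.sum_congr rfl fun k _ => ?_
            rw [RingHom.map_mul, hHerm]; ring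
        _ = conj ((r : ℂ) * conj (v j)) := h2
        _ = (r : ℂ) * v j := by simp [Complex.conj_ofReal]
    have h3 : ∑ k, conj (v k) * conj (ξ k) = 1 := by
      have := congrArg conj hvξ
      rw [map_sum] at this
      simpa using this
    have e1 : ∑ k, ψ j k * conj (ξ k)
        = (∑ k, H j k * conj (ξ k))
          + ((1 : ℂ) - (r : ℂ)) * v j * (∑ k, conj (v k) * conj (ξ k)) := by
      rw [Finset.mul_sum, ← Finset.sum_add_distrib]
      refine Finset.sum_congr rfl fun k _ => by rw [hψ]; ring
    rw [e1, h1, h3]; ring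
  -- det ψ ≠ 0
  have hdet : ψ.det ≠ 0 := by
    intro hdet0
    obtain ⟨x, hx0, hxψ⟩ := (Matrix.exists_mulVec_eq_zero_iff).2 hdet0
    have hrow : ∀ j, ∑ k, ψ j k * x k = 0 := by
      intro j
      have := congrFun hxψ j
      simpa [Matrix.mulVec, dotProduct] using this
    -- conj v ⬝ x = 0
    have hvx : ∑ k, conj (v k) * x k = 0 := by
      calc ∑ k, conj (v k) * x k = ∑ k, (∑ j, ξ j * ψ j k) * x k := by
            exact Finset.sum_congr rfl fun k _ => by rw [hξψ]
        _ = ∑ k, ∑ j, ξ j * (ψ j k * x k) := by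
            refine Finset.sum_congr rfl fun k _ => by
              rw [Finset.sum_mul]
              exact Finset.sum_congr rfl fun j _ => mul_assoc _ _ _
        _ = ∑ j, ξ j * ∑ k, ψ j k * x k := by
            rw [Finset.sum_comm]
            exact Finset.sum_congr rfl fun j _ => by rw [Finset.mul_sum]
        _ = 0 := by simp [hrow]
    -- H x = 0
    have hHx : ∀ j, ∑ k, H j k * x k = 0 := by
      intro j
      have e1 : ∑ k, ψ j k * x k
          = (∑ k, H j k * x k) + ((1 : ℂ) - (r : ℂ)) * v j * (∑ k, conj (v k) * x k) := by
        rw [Finset.mul_sum, ← Finset.sum_add_distrib]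
        refine Finset.sum_congr rfl fun k _ => by rw [hψ]; ring
      have := hrow j
      rw [e1, hvx] at this
      simpa using this
    -- find a column c with nonzero adjugate pairing
    have hc : ∃ c, (∑ j, conj (v j) * H.adjugate j c) ≠ 0 := by
      by_contra hall
      push_neg at hall
      apply hJ0
      rw [hJ, Finset.sum_comm]
      refine Finset.sum_eq_zero fun k _ => ?_
      have : ∑ j, conj (v j) * H.adjugate j k * v k
          = (∑ j, conj (v j) * H.adjugate j k) * v k := by rw [Finset.sum_mul]
      rw [this, hall k, zero_mul]
    obtain ⟨c, hc⟩ := hc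
    -- the row-updated matrix is invertible and kills x
    set B : Matrix (Fin (n + 1)) (Fin (n + 1)) ℂ :=
      H.updateRow c (fun k => conj (v k)) with hB
    have hdetB : B.det = ∑ j, conj (v j) * H.adjugate j c := by
      have h1 : B.det = Matrix.cramer Hᵀ (fun k => conj (v k)) c :=
        (Matrix.cramer_transpose_apply H (fun k => conj (v k)) c).symm
      rw [h1, Matrix.cramer_eq_adjugate_mulVec, ← Matrix.adjugate_transpose]
      simp [Matrix.mulVec, dotProduct, Matrix.transpose_apply, mul_comm]
    have hdetB0 : B.det ≠ 0 := by rw [hdetB]; exact hc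
    have hBx : B *ᵥ x = 0 := by
      funext j
      by_cases hjc : j = c
      · subst hjc
        simpa [Matrix.mulVec, dotProduct, hB, Matrix.updateRow_self] using hvx
      · simpa [Matrix.mulVec, dotProduct, hB, Matrix.updateRow_ne hjc] using hHx j
    have : x = 0 := by
      have hBinv : B⁻¹ * B = 1 := Matrix.nonsing_inv_mul B (isUnit_iff_ne_zero.2 hdetB0)
      calc x = (B⁻¹ * B) *ᵥ x := by rw [hBinv, Matrix.one_mulVec]
        _ = B⁻¹ *ᵥ (B *ᵥ x) := by rw [Matrix.mulVec_mulVec]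
        _ = 0 := by rw [hBx, Matrix.mulVec_zero]
    exact hx0 this
  have hPψ : P * ψ = 1 := by
    rw [hP]; exact Matrix.nonsing_inv_mul ψ (isUnit_iff_ne_zero.2 hdet)
  have hPψ' : ∀ j k, ∑ l, P j l * ψ l k = (1 : Matrix (Fin (n+1)) (Fin (n+1)) ℂ) j k := by
    intro j k
    have := congrFun (congrFun hPψ j) k
    simpa [Matrix.mul_apply] using this
  -- P v = conj ξ
  have hPv : ∀ j, ∑ k, P j k * v k = conj (ξ j) := by
    intro j
    calc ∑ k, P j k * v k = ∑ k, P j k * ∑ l, ψ k l * conj (ξ l) := by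
          exact Finset.sum_congr rfl fun k _ => by rw [hψξ]
      _ = ∑ l, (∑ k, P j k * ψ k l) * conj (ξ l) := by
          simp_rw [Finset.mul_sum, Finset.sum_mul]
          rw [Finset.sum_comm]
          exact Finset.sum_congr rfl fun l _ => Finset.sum_congr rfl fun k _ => by ring
      _ = ∑ l, (1 : Matrix (Fin (n+1)) (Fin (n+1)) ℂ) j l * conj (ξ l) := by
          exact Finset.sum_congr rfl fun l _ => by rw [hPψ' j l]
      _ = conj (ξ j) := by simp [Matrix.one_apply]
  intro α β
  set a := α.castSucc with ha
  set b := β.castSucc with hb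
  set lam : ℂ := H w a / v w - conj (v a) * H w w / (v w * conj (v w)) with hlam
  set c0 : ℂ := conj (v a) / conj (v w) with hc0
  set f : Fin (n + 1) → ℂ := fun j => ψ j a - c0 * ψ j w - lam * v j with hf
  have hfγ : ∀ γ : Fin n, h γ α = f γ.castSucc := by
    intro γ
    rw [hh]
    simp only [hf, hc0, hlam]
    rw [hψ, hψ]
    field_simp
    ring
  have hfw : f w = 0 := by
    simp only [hf, hc0, hlam]
    rw [hψ, hψ]
    field_simp
    ring
  have hbw : b ≠ w := by
    rw [hw, hb]
    exact (Fin.castSucc_lt_last β).ne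
  calc ∑ γ : Fin n, P b γ.castSucc * h γ α
      = ∑ γ : Fin n, P b γ.castSucc * f γ.castSucc := by
        exact Finset.sum_congr rfl fun γ _ => by rw [hfγ]
    _ = ∑ j : Fin (n + 1), P b j * f j := by
        rw [Fin.sum_univ_castSucc]
        rw [← hw, hfw, mul_zero, add_zero]
    _ = (∑ j, P b j * ψ j a) - c0 * (∑ j, P b j * ψ j w) - lam * (∑ j, P b j * v j) := by
        rw [Finset.mul_sum, Finset.mul_sum, ← Finset.sum_sub_distrib, ← Finset.sum_sub_distrib]
        refine Finset.sum_congr rfl fun j _ => by simp only [hf]; ring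
    _ = (if α = β then (1 : ℂ) else 0) - conj (ξ b) * lam := by
        rw [hPψ' b a, hPψ' b w, hPv b]
        have h1 : (1 : Matrix (Fin (n+1)) (Fin (n+1)) ℂ) b w = 0 :=
          Matrix.one_apply_ne hbw
        have h2 : (1 : Matrix (Fin (n+1)) (Fin (n+1)) ℂ) b a
            = (if α = β then (1 : ℂ) else 0) := by
          rw [Matrix.one_apply]
          by_cases hab : α = β
          · simp [hab, ha, hb]
          · have : b ≠ a := fun hba => hab (Fin.castSucc_injective n (ha ▸ hb ▸ hba)).symm
            simp [this, hab]
        rw [h1, h2]; ring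
    _ = (if α = β then (1 : ℂ) else 0) - conj (ξ b) *
        (H w a / v w - conj (v a) * H w w / (v w * conj (v w))) := by rw [hlam]
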